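/- In the setting of the generalized Ore localization A[S_1,...,S_m] (with assumptions (O1), (O2)), the following universal property holds: for any ring homomorphism ψ: A → B such that ψ(s) is invertible in ψ(e_i) B ψ(e_i) for every s ∈ S_i and every i, there is a unique ring homomorphism σ: A[S_1,...,S_m] → B with σ ∘ φ = ψ. Moreover, if ψ is injective then σ is injective. -/

import Mathlib

universe u

/-- Universal property of the generalized Ore localization: under the generalized Ore conditions
(O1), (O2), there is a ring `B = A[S_1,…,S_m]` with an injective canonical map `φ : A → B`
inverting each `S i` inside the corner `φ(e_i) B φ(e_i)`, such that for any ring homomorphism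
`ψ : A → C` with every `ψ(s)`, `s ∈ S i`, invertible in `ψ(e_i) C ψ(e_i)`, there is a unique
ring homomorphism `σ : B → C` with `σ ∘ φ = ψ`; moreover if `ψ` is injective then so is `σ`. -/
theorem stmt8 (A : Type u) [Ring A] (A0 : Subring A)
    (hA0 : ∀ x y : A, x ∈ A0 → y ∈ A0 → x * y = y * x)
    (m : ℕ) (e : Fin m → A)
    (hid : ∀ i, IsIdempotentElem (e i))
    (horth : ∀ i j, i ≠ j → e i * e j = 0)
    (hsum : ∑ i, e i = 1)
    (hcomm : ∀ f : A, f ∈ A0 → ∀ i, f * e i = e i * f)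
    (S : Fin m → Set A)
    (hSe : ∀ i, e i ∈ S i)
    (hSmul : ∀ i, ∀ s ∈ S i, ∀ t ∈ S i, s * t ∈ S i)
    (hScorner : ∀ i, ∀ s ∈ S i, ∃ f ∈ A0, s = e i * f * e i)
    (O1 : ∀ i, ∀ s ∈ S i,
      (∀ g : A, s * (e i * g) = 0 → e i * g = 0) ∧
      (∀ h : A, h * e i * s = 0 → h * e i = 0))
    (O2 : ∀ i j : Fin m, ∀ a : A, e j * a * e i = a → ∀ s ∈ S i, ∀ t ∈ S j,
      ∃ b c u v : A, e j * b * e i = b ∧ e j * c * e i = c ∧ u ∈ S j ∧ v ∈ S i ∧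
        u * a = b * s ∧ a * v = t * c) :
    ∃ (B : Type u) (_ : Ring B) (φ : A →+* B),
      Function.Injective φ ∧
        (∀ i, ∀ s ∈ S i, ∃ x : B,
          φ (e i) * x * φ (e i) = x ∧ φ s * x = φ (e i) ∧ x * φ s = φ (e i)) ∧
        ∀ (C : Type u) (_ : Ring C) (ψ : A →+* C),
          (∀ i, ∀ s ∈ S i, ∃ y : C,
            ψ (e i) * y * ψ (e i) = y ∧ ψ s * y = ψ (e i) ∧ y * ψ s = ψ (e i)) →
          (∃! σ : B →+* C, σ.comp φ = ψ) ∧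
            (Function.Injective ψ →
              ∀ σ : B →+* C, σ.comp φ = ψ → Function.Injective σ) := by
  classical
  -- normal form for elements of S i
  have hrep : ∀ i, ∀ s ∈ S i, ∃ f, f ∈ A0 ∧ s = f * e i ∧ f * e i = e i * f := by
    intro i s hs
    obtain ⟨f, hf, rfl⟩ := hScorner i s hs
    have h1 : f * e i = e i * f := hcomm f hf i
    refine ⟨f, hf, ?_, h1⟩
    calc e i * f * e i = e i * (f * e i) := mul_assoc _ _ _
      _ = e i * (e i * f) := by rw [h1]
      _ = e i * e i * f := (mul_assoc _ _ _).symm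
      _ = e i * f := by rw [hid i]
      _ = f * e i := h1.symm
  have hse1 : ∀ i, ∀ s ∈ S i, e i * s = s := by
    intro i s hs
    obtain ⟨f, _, h2, h3⟩ := hrep i s hs
    rw [h2, h3, ← mul_assoc, hid i]
  have hse2 : ∀ i, ∀ s ∈ S i, s * e i = s := by
    intro i s hs
    obtain ⟨f, _, h2, _⟩ := hrep i s hs
    rw [h2, mul_assoc, hid i]
  have hse3 : ∀ i j, j ≠ i → ∀ s ∈ S i, s * e j = 0 := by
    intro i j hji s hs
    obtain ⟨f, _, h2, _⟩ := hrep i s hs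
    rw [h2, mul_assoc, horth i j (Ne.symm hji), mul_zero]
  have hse4 : ∀ i j, j ≠ i → ∀ s ∈ S i, e j * s = 0 := by
    intro i j hji s hs
    obtain ⟨f, _, h2, h3⟩ := hrep i s hs
    rw [h2, h3, ← mul_assoc, horth j i hji, zero_mul]
  have hst0 : ∀ i j, i ≠ j → ∀ s ∈ S i, ∀ t ∈ S j, s * t = 0 := by
    intro i j hij s hs t ht
    rw [← hse1 j t ht, ← mul_assoc, hse3 i j (Ne.symm hij) s hs, zero_mul]
  have hstc : ∀ i, ∀ s ∈ S i, ∀ t ∈ S i, s * t = t * s := by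
    intro i s hs t ht
    obtain ⟨f, hf, h2, h3⟩ := hrep i s hs
    obtain ⟨g, hg, h4, h5⟩ := hrep i t ht
    have key : ∀ p q : A, p ∈ A0 → q ∈ A0 → q * e i = e i * q →
        (p * e i) * (e i * q) = (p * q) * e i := by
      intro p q _ hq h5'
      rw [← mul_assoc, mul_assoc p (e i) (e i), hid i, mul_assoc, ← h5', ← mul_assoc]
    have h4' : t = e i * g := by rw [h4, h5]
    have h2' : s = e i * f := by rw [h2, h3]
    calc s * t = (f * e i) * (e i * g) := by rw [← h2, ← h4']
      _ = (f * g) * e i := key f g hf hg h5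
      _ = (g * f) * e i := by rw [hA0 f g hf hg]
      _ = (g * e i) * (e i * f) := (key g f hg hf h3).symm
      _ = t * s := by rw [← h4, ← h2']
  -- corner facts
  have cornerL : ∀ (j i : Fin m) (b : A), e j * b * e i = b → e j * b = b ∧ b * e i = b := by
    intro j i b hb
    constructor
    · conv_lhs => rw [← hb]
      rw [← mul_assoc, ← mul_assoc, hid j, hb]
    · conv_lhs => rw [← hb]
      rw [mul_assoc (e j * b), hid i, hb]
  -- the multiplicative set T
  have Tone : (1 : A) ∈ {a : A | ∃ c : Fin m → A, (∀ i, c i ∈ S i) ∧ a = ∑ i, c i} :=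
    ⟨e, hSe, hsum.symm⟩
  have Tmul : ∀ a ∈ {a : A | ∃ c : Fin m → A, (∀ i, c i ∈ S i) ∧ a = ∑ i, c i},
      ∀ b ∈ {a : A | ∃ c : Fin m → A, (∀ i, c i ∈ S i) ∧ a = ∑ i, c i},
      a * b ∈ {a : A | ∃ c : Fin m → A, (∀ i, c i ∈ S i) ∧ a = ∑ i, c i} := by
    rintro a ⟨c, hc, rfl⟩ b ⟨d, hd, rfl⟩
    refine ⟨fun i => c i * d i, fun i => hSmul i _ (hc i) _ (hd i), ?_⟩
    rw [Finset.sum_mul_sum]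
    refine Finset.sum_congr rfl fun i _ => ?_
    refine Finset.sum_eq_single i (fun j _ hji => ?_) (fun h => absurd (Finset.mem_univ i) h)
    exact hst0 i j (Ne.symm hji) (c i) (hc i) (d j) (hd j)
  set T : Submonoid A :=
    ⟨⟨{a : A | ∃ c : Fin m → A, (∀ i, c i ∈ S i) ∧ a = ∑ i, c i},
      fun {a b} ha hb => Tmul a ha b hb⟩, Tone⟩ with hTdef
  have memT : ∀ a : A, a ∈ T ↔ ∃ c : Fin m → A, (∀ i, c i ∈ S i) ∧ a = ∑ i, c i :=
    fun a => Iff.rfl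
  -- picking out components
  have eT : ∀ (c : Fin m → A), (∀ i, c i ∈ S i) → ∀ j, e j * (∑ i, c i) = c j := by
    intro c hc j
    rw [Finset.mul_sum]
    refine (Finset.sum_eq_single j (fun i _ hij => hse4 i j (Ne.symm hij) (c i) (hc i))
      (fun h => absurd (Finset.mem_univ j) h)).trans (hse1 j (c j) (hc j))
  have Te : ∀ (c : Fin m → A), (∀ i, c i ∈ S i) → ∀ j, (∑ i, c i) * e j = c j := by
    intro c hc j
    rw [Finset.sum_mul]
    refine (Finset.sum_eq_single j (fun i _ hij => hse3 i j (Ne.symm hij) (c i) (hc i))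
      (fun h => absurd (Finset.mem_univ j) h)).trans (hse2 j (c j) (hc j))
  -- regularity
  have regL : ∀ a ∈ T, ∀ r : A, a * r = 0 → r = 0 := by
    rintro a ⟨c, hc, rfl⟩ r h
    have h1 : ∀ j, e j * r = 0 := by
      intro j
      apply (O1 j (c j) (hc j)).1
      have hcr : c j * r = 0 := by
        rw [← eT c hc j, mul_assoc, h, mul_zero]
      rwa [← mul_assoc, hse2 j (c j) (hc j)]
    rw [← one_mul r, ← hsum, Finset.sum_mul]
    simp [h1]
  have regR : ∀ a ∈ T, ∀ r : A, r * a = 0 → r = 0 := by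
    rintro a ⟨c, hc, rfl⟩ r h
    have h1 : ∀ j, r * e j = 0 := by
      intro j
      apply (O1 j (c j) (hc j)).2
      have hcr : r * c j = 0 := by
        rw [← Te c hc j, ← mul_assoc, h, zero_mul]
      rwa [mul_assoc, hse1 j (c j) (hc j)]
    rw [← mul_one r, ← hsum, Finset.mul_sum]
    simp [h1]
  -- Ore condition, step by step over a list
  have step : ∀ (j : Fin m) (r : A) (c : Fin m → A), (∀ i, c i ∈ S i) →
      ∀ l : List (Fin m), ∃ u, u ∈ S j ∧
        ∀ i ∈ l, ∃ b, e j * b * e i = b ∧ u * (e j * r * e i) = b * c i := by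
    intro j r c hc l
    induction l with
    | nil => exact ⟨e j, hSe j, by simp⟩
    | cons i l ih =>
      obtain ⟨u, hu, hul⟩ := ih
      have ha : e j * (u * (e j * r * e i)) * e i = u * (e j * r * e i) := by
        rw [← mul_assoc (e j) u, hse1 j u hu, mul_assoc u, mul_assoc (e j * r), hid i]
      obtain ⟨b', c', u', v, hb', hc', hu', hv, h1, h2⟩ :=
        O2 i j (u * (e j * r * e i)) ha (c i) (hc i) (e j) (hSe j)
      refine ⟨u' * u, hSmul j _ hu' _ hu, ?_⟩
      intro i' hi'
      rcases List.mem_cons.mp hi' with h | h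
      · subst h
        exact ⟨b', hb', by rw [mul_assoc]; exact h1⟩
      · obtain ⟨b, hbc, hb⟩ := hul i' h
        refine ⟨u' * b, ?_, ?_⟩
        · rw [← mul_assoc (e j) u', hse1 j u' hu', mul_assoc u', (cornerL j i' b hbc).2]
        · rw [mul_assoc u' u, hb, ← mul_assoc]
  -- the (left) Ore condition for T
  have oreC : ∀ (r : A) (t : A), t ∈ T → ∃ (r' : A) (t' : A), t' ∈ T ∧ t' * r = r' * t := by
    intro r t ht
    obtain ⟨c, hc, rfl⟩ := ht
    choose u hu hub using fun j => step j r c hc (List.finRange m)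
    have hub' : ∀ j i, ∃ b, e j * b * e i = b ∧ u j * (e j * r * e i) = b * c i :=
      fun j i => hub j i (List.mem_finRange i)
    choose b hbc hb using hub'
    refine ⟨∑ j, ∑ i, b j i, ∑ j, u j, ⟨u, hu, rfl⟩, ?_⟩
    have lhs : (∑ j, u j) * r = ∑ j, ∑ i, b j i * c i := by
      rw [Finset.sum_mul]
      refine Finset.sum_congr rfl fun j _ => ?_
      have hr : u j * r = ∑ i, u j * (e j * r * e i) := by
        calc u j * r = u j * (e j * r) := by rw [← mul_assoc, hse2 j (u j) (hu j)]
          _ = u j * (e j * r) * (∑ i, e i) := by rw [hsum, mul_one]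
          _ = ∑ i, u j * (e j * r) * e i := Finset.mul_sum _ _ _
          _ = ∑ i, u j * (e j * r * e i) := by
              refine Finset.sum_congr rfl fun i _ => ?_
              rw [mul_assoc]
      rw [hr]
      exact Finset.sum_congr rfl fun i _ => hb j i
    have rhs : (∑ j, ∑ i, b j i) * (∑ i, c i) = ∑ j, ∑ i, b j i * c i := by
      rw [Finset.sum_mul]
      refine Finset.sum_congr rfl fun j _ => ?_
      rw [Finset.sum_mul]
      refine Finset.sum_congr rfl fun i _ => ?_
      rw [Finset.mul_sum]
      refine Finset.sum_eq_single i (fun i' _ hne => ?_) (fun h => absurd (Finset.mem_univ i) h)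
      rw [← (cornerL j i (b j i) (hbc j i)).2, mul_assoc,
        hse4 i' i (Ne.symm hne) (c i') (hc i'), mul_zero]
    rw [lhs, rhs]
  -- the Ore set instance
  haveI : OreLocalization.OreSet T := by
    refine Classical.choice (OreLocalization.nonempty_oreSet_iff.mpr ⟨?_, ?_⟩)
    · intro r₁ r₂ s h
      refine ⟨1, ?_⟩
      have h0 : (r₁ - r₂) * (s : A) = 0 := by rw [sub_mul, h, sub_self]
      have := regR (s : A) s.2 _ h0
      rw [sub_eq_zero] at this
      rw [this]
    · intro r s
      obtain ⟨r', t', ht', h⟩ := oreC r (s : A) s.2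
      exact ⟨r', ⟨t', ht'⟩, h⟩
  refine ⟨OreLocalization T A, inferInstance,
    (OreLocalization.numeratorRingHom : A →+* OreLocalization T A), ?_, ?_, ?_⟩
  · -- injectivity of φ
    have hTreg : T ≤ nonZeroDivisorsLeft A := by
      intro τ hτ
      exact (mem_nonZeroDivisorsLeft_iff A).mpr fun y hy => regL τ hτ y hy
    exact fun a b h => OreLocalization.numeratorHom_inj hTreg h
  · -- corner inverses in B
    intro i s hs
    set c : Fin m → A := fun j => if j = i then s else e j with hcdef
    have hcS : ∀ j, c j ∈ S j := by
      intro j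
      by_cases h : j = i
      · subst h; simpa [hcdef] using hs
      · simpa [hcdef, h] using hSe j
    have hT : (∑ j, c j) ∈ T := ⟨c, hcS, rfl⟩
    set τ : T := ⟨∑ j, c j, hT⟩ with hτdef
    have hτei : e i * (τ : A) = s := by
      have := eT c hcS i
      simpa [hcdef] using this
    have hτei' : (τ : A) * e i = s := by
      have := Te c hcS i
      simpa [hcdef] using this
    set ν : A →* OreLocalization T A := OreLocalization.numeratorHom with hνdef
    set u : Units (OreLocalization T A) := OreLocalization.numeratorUnit τ with hudef
    have huval : (↑u : OreLocalization T A) = ν (τ : A) := rfl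
    set E : OreLocalization T A := ν (e i) with hEdef
    have hEu : E * ↑u = ↑u * E := by
      rw [huval, hEdef, ← map_mul, ← map_mul, hτei, hτei']
    have hEu' : E * (↑u⁻¹ : Units (OreLocalization T A)) = ↑u⁻¹ * E := by
      calc E * (↑u⁻¹ : Units (OreLocalization T A))
          = ↑u⁻¹ * (↑u * (E * ↑u⁻¹)) := by rw [Units.inv_mul_cancel_left]
        _ = ↑u⁻¹ * (↑u * E * ↑u⁻¹) := by rw [mul_assoc (↑u : OreLocalization T A)]
        _ = ↑u⁻¹ * (E * ↑u * ↑u⁻¹) := by rw [← hEu]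
        _ = ↑u⁻¹ * E := by rw [Units.mul_inv_cancel_right]
    have hEE : E * E = E := by rw [hEdef, ← map_mul, hid i]
    have hsu : ν s = ↑u * E := by rw [huval, hEdef, ← map_mul, hτei']
    have hsu' : ν s = E * ↑u := by rw [huval, hEdef, ← map_mul, hτei]
    have hφ : ∀ a : A, (OreLocalization.numeratorRingHom a : OreLocalization T A) = ν a :=
      fun a => rfl
    refine ⟨E * ↑u⁻¹, ?_, ?_, ?_⟩
    · rw [hφ (e i)]
      calc E * (E * ↑u⁻¹) * E = E * ↑u⁻¹ * E := by rw [← mul_assoc, hEE]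
        _ = E * (↑u⁻¹ * E) := by rw [mul_assoc]
        _ = E * (E * ↑u⁻¹) := by rw [← hEu']
        _ = E * E * ↑u⁻¹ := by rw [mul_assoc]
        _ = E * ↑u⁻¹ := by rw [hEE]
    · rw [hφ (e i), hφ s, hsu]
      calc ↑u * E * (E * ↑u⁻¹) = ↑u * (E * E) * ↑u⁻¹ := by
            simp only [mul_assoc]
        _ = ↑u * E * ↑u⁻¹ := by rw [hEE]
        _ = E * ↑u * ↑u⁻¹ := by rw [← hEu]
        _ = E := by rw [Units.mul_inv_cancel_right]
    · rw [hφ (e i), hφ s, hsu']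
      calc E * ↑u⁻¹ * (E * ↑u) = E * (↑u⁻¹ * E) * ↑u := by
            simp only [mul_assoc]
        _ = E * (E * ↑u⁻¹) * ↑u := by rw [← hEu']
        _ = E * E * (↑u⁻¹ * ↑u) := by simp only [mul_assoc]
        _ = E := by rw [hEE, Units.inv_mul, mul_one]
  · -- universal property
    intro C _ ψ hψ
    have hunit : ∀ τ : T, IsUnit (ψ (τ : A)) := by
      rintro ⟨t, c, hc, rfl⟩
      choose y hy1 hy2 hy3 using fun i => hψ i (c i) (hc i)
      have cross1 : ∀ i j, j ≠ i → ψ (c i) * y j = 0 := by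
        intro i j hji
        have h0 : ψ (c i) * ψ (e j) = 0 := by
          rw [← map_mul, hse3 i j hji (c i) (hc i), map_zero]
        rw [← hy1 j, ← mul_assoc, ← mul_assoc, h0, zero_mul, zero_mul]
      have cross2 : ∀ i j, i ≠ j → y i * ψ (c j) = 0 := by
        intro i j hij
        have h0 : ψ (e i) * ψ (c j) = 0 := by
          rw [← map_mul, hse4 j i hij (c j) (hc j), map_zero]
        rw [← hy1 i, mul_assoc, h0, mul_zero]
      refine ⟨⟨ψ (∑ i, c i), ∑ i, y i, ?_, ?_⟩, rfl⟩
      · rw [map_sum, Finset.sum_mul_sum]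
        calc ∑ i, ∑ j, ψ (c i) * y j = ∑ i, ψ (e i) := by
              refine Finset.sum_congr rfl fun i _ => ?_
              refine (Finset.sum_eq_single i (fun j _ hji => cross1 i j hji)
                (fun h => absurd (Finset.mem_univ i) h)).trans (hy2 i)
          _ = ψ (∑ i, e i) := (map_sum ψ e Finset.univ).symm
          _ = 1 := by rw [hsum, map_one]
      · rw [map_sum, Finset.sum_mul_sum]
        calc ∑ i, ∑ j, y i * ψ (c j) = ∑ i, ψ (e i) := by
              refine Finset.sum_congr rfl fun i _ => ?_
              refine (Finset.sum_eq_single i (fun j _ hji => cross2 i j (Ne.symm hji))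
                (fun h => absurd (Finset.mem_univ i) h)).trans (hy3 i)
          _ = ψ (∑ i, e i) := (map_sum ψ e Finset.univ).symm
          _ = 1 := by rw [hsum, map_one]
    set fS : T →* Units C :=
      { toFun := fun τ => (hunit τ).unit
        map_one' := Units.ext (by simp)
        map_mul' := fun τ₁ τ₂ => Units.ext (by simp) } with hfSdef
    have hf : ∀ s : T, ψ (s : A) = ((fS s : Units C) : C) :=
      fun s => (IsUnit.unit_spec (hunit s)).symm
    set σ : OreLocalization T A →+* C := OreLocalization.universalHom ψ fS hf with hσdef
    have hcompφ : σ.comp OreLocalization.numeratorRingHom = ψ :=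
      RingHom.ext fun r => OreLocalization.universalHom_commutes ψ fS hf
    have huniq : ∀ σ' : OreLocalization T A →+* C,
        σ'.comp OreLocalization.numeratorRingHom = ψ → σ' = σ :=
      fun σ' h => OreLocalization.universalHom_unique ψ fS hf σ'
        (fun r => RingHom.congr_fun h r)
    refine ⟨⟨σ, hcompφ, huniq⟩, ?_⟩
    intro hinj σ' h
    have ker0 : ∀ x : OreLocalization T A, σ x = 0 → x = 0 := by
      refine OreLocalization.ind fun r s => ?_
      intro hx
      rw [hσdef, OreLocalization.universalHom_apply] at hx
      have hψr : ψ r = 0 := by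
        have := congrArg (fun z => ((fS s : Units C) : C) * z) hx
        simpa using this
      have hr : r = 0 := hinj (by rw [hψr, map_zero])
      rw [hr, OreLocalization.zero_oreDiv]
    rw [huniq σ' h]
    intro a b hab
    have h0 : σ (a - b) = 0 := by rw [map_sub, hab, sub_self]
    exact sub_eq_zero.mp (ker0 _ h0)
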